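/- Let n ≥ 1 and let μ be an integral dominant weight. Then for all α, β ∈ P⁰_μ, the equality (α + 2ρ, α) = (β + 2ρ, β) implies α = β. -/
import Mathlib


open scoped BigOperators

/-- A weight μ = Σ μ_i ε_i (coordinates, 0-indexed) is integral dominant if
μ_1 ≥ μ_2 ≥ … ≥ μ_n ≥ 0. -/
def IntegralDominant (n : ℕ) (μ : Fin n → ℤ) : Prop :=
  (∀ i j : Fin n, i ≤ j → μ j ≤ μ i) ∧ ∀ i : Fin n, 0 ≤ μ i

/-- P⁰_μ: the set consisting of μ together with those weights μ ± ε_i that are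
integral dominant. -/
def P0 (n : ℕ) (μ : Fin n → ℤ) : Set (Fin n → ℤ) :=
  {ν | IntegralDominant n ν ∧
    (ν = μ ∨ ∃ i : Fin n,
      ν = Function.update μ i (μ i + 1) ∨ ν = Function.update μ i (μ i - 1))}

/-- The pairing (2ρ, ν) = Σ_{i=1}^n (2n − 2i + 1) ν_i (0-indexed coordinates). -/
def pairTwoRho (n : ℕ) (ν : Fin n → ℤ) : ℤ :=
  ∑ i : Fin n, (2 * (n : ℤ) - 2 * (((i : ℕ) : ℤ) + 1) + 1) * ν i

/-- The pairing (ν + 2ρ, ν) = (ν, ν) + (2ρ, ν). -/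
def pairCasimir (n : ℕ) (ν : Fin n → ℤ) : ℤ :=
  (∑ i : Fin n, ν i * ν i) + pairTwoRho n ν

lemma sum_update_g (n : ℕ) (g : Fin n → ℤ → ℤ) (μ : Fin n → ℤ) (i : Fin n) (v : ℤ) :
    ∑ j : Fin n, g j (Function.update μ i v j) =
      ∑ j : Fin n, g j (μ j) - g i (μ i) + g i v := by
  rw [← Finset.sum_erase_add _ _ (Finset.mem_univ i),
      ← Finset.sum_erase_add _ (fun j => g j (μ j)) (Finset.mem_univ i)]
  have he : ∑ j ∈ Finset.univ.erase i, g j (Function.update μ i v j)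
      = ∑ j ∈ Finset.univ.erase i, g j (μ j) :=
    Finset.sum_congr rfl fun j hj => by
      rw [Function.update_of_ne (Finset.ne_of_mem_erase hj)]
  rw [he, Function.update_self]
  ring

lemma pairCasimir_eq_sum (n : ℕ) (ν : Fin n → ℤ) :
    pairCasimir n ν =
      ∑ i : Fin n, (ν i * ν i + (2 * (n : ℤ) - 2 * (((i : ℕ) : ℤ) + 1) + 1) * ν i) := by
  rw [pairCasimir, pairTwoRho, ← Finset.sum_add_distrib]

lemma pairCasimir_update (n : ℕ) (μ : Fin n → ℤ) (i : Fin n) (v : ℤ) :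
    pairCasimir n (Function.update μ i v) =
      pairCasimir n μ
        - (μ i * μ i + (2 * (n : ℤ) - 2 * (((i : ℕ) : ℤ) + 1) + 1) * μ i)
        + (v * v + (2 * (n : ℤ) - 2 * (((i : ℕ) : ℤ) + 1) + 1) * v) := by
  rw [pairCasimir_eq_sum, pairCasimir_eq_sum,
    sum_update_g n (fun j x => x * x + (2 * (n : ℤ) - 2 * (((j : ℕ) : ℤ) + 1) + 1) * x) μ i v]

lemma val_plus (n : ℕ) (μ : Fin n → ℤ) (i : Fin n) :
    pairCasimir n (Function.update μ i (μ i + 1)) =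
      pairCasimir n μ + (2 * μ i + 2 * (n : ℤ) - 2 * ((i : ℕ) : ℤ)) := by
  rw [pairCasimir_update]; ring

lemma val_minus (n : ℕ) (μ : Fin n → ℤ) (i : Fin n) :
    pairCasimir n (Function.update μ i (μ i - 1)) =
      pairCasimir n μ - (2 * μ i + 2 * (n : ℤ) - 2 * ((i : ℕ) : ℤ)) + 2 := by
  rw [pairCasimir_update]; ring

lemma eq_of_diff (n : ℕ) (μ : Fin n → ℤ) (hμ : IntegralDominant n μ) (i j : Fin n)
    (h : μ i - ((i : ℕ) : ℤ) = μ j - ((j : ℕ) : ℤ)) : i = j := by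
  rcases lt_trichotomy i j with hlt | heq | hgt
  · have h1 := hμ.1 i j hlt.le
    have h2 : (i : ℕ) < (j : ℕ) := hlt
    omega
  · exact heq
  · have h1 := hμ.1 j i hgt.le
    have h2 : (j : ℕ) < (i : ℕ) := hgt
    omega

/-- for α, β ∈ P⁰_μ, (α + 2ρ, α) = (β + 2ρ, β) implies α = β. -/
theorem stmt13 (n : ℕ) (hn : 1 ≤ n) (μ : Fin n → ℤ) (hμ : IntegralDominant n μ)
    (α β : Fin n → ℤ) (hα : α ∈ P0 n μ) (hβ : β ∈ P0 n μ)
    (h : pairCasimir n α = pairCasimir n β) : α = β := by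
  obtain ⟨hda, ha⟩ := hα
  obtain ⟨hdb, hb⟩ := hβ
  rcases ha with rfl | ⟨i, rfl | rfl⟩ <;> rcases hb with rfl | ⟨j, rfl | rfl⟩
  · rfl
  · -- μ vs μ+ε_j
    exfalso
    rw [val_plus] at h
    have h1 := hμ.2 j
    have h2 : (j : ℕ) < n := j.isLt
    omega
  · -- μ vs μ-ε_j
    exfalso
    rw [val_minus] at h
    have h1 := hdb.2 j
    rw [Function.update_self] at h1
    have h2 : (j : ℕ) < n := j.isLt
    omega
  · -- μ+ε_i vs μ
    exfalso
    rw [val_plus] at h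
    have h1 := hμ.2 i
    have h2 : (i : ℕ) < n := i.isLt
    omega
  · -- μ+ε_i vs μ+ε_j
    have hij : i = j := by
      apply eq_of_diff n μ hμ
      rw [val_plus, val_plus] at h
      omega
    subst hij; rfl
  · -- μ+ε_i vs μ-ε_j
    exfalso
    rw [val_plus, val_minus] at h
    have h1 : 0 ≤ μ i := hμ.2 i
    have h2 : (i : ℕ) < n := i.isLt
    have h3 := hdb.2 j
    rw [Function.update_self] at h3
    have h4 : (j : ℕ) < n := j.isLt
    omega
  · -- μ-ε_i vs μ
    exfalso
    rw [val_minus] at h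
    have h1 := hda.2 i
    rw [Function.update_self] at h1
    have h2 : (i : ℕ) < n := i.isLt
    omega
  · -- μ-ε_i vs μ+ε_j
    exfalso
    rw [val_minus, val_plus] at h
    have h1 : 0 ≤ μ j := hμ.2 j
    have h2 : (j : ℕ) < n := j.isLt
    have h3 := hda.2 i
    rw [Function.update_self] at h3
    have h4 : (i : ℕ) < n := i.isLt
    omega
  · -- μ-ε_i vs μ-ε_j
    have hij : i = j := by
      apply eq_of_diff n μ hμ
      rw [val_minus, val_minus] at h
      omega
    subst hij; rfl
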